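/- arXiv:2201.02972 — 5 statements merged into one kernel-verified Lean document; each statement's English description precedes it below -/
import Mathlib

section
/- Let U, V, W be independent exponential random variables with means β₁ > 0, β₂ > 0, β₃ > 0 respectively, and let c₁ > 0, c₂ ≥ 0, c₃ ≥ 0 be constants. Then P(U ≥ c₁·V² + c₂·W + c₃) = [β₁ / (2β₂(β₁ + c₂·β₃))] · √(πβ₁/c₁) · exp(β₁/(4β₂²c₁) − c₃/β₁) · erfc((1/(2β₂))·√(β₁/c₁)), where erfc(z) = (2/√π)·∫_z^∞ exp(−t²) dt. -/
open MeasureTheory ProbabilityTheory Real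

/-- The complementary error function `erfc(z) = (2/√π)·∫_z^∞ exp(−t²) dt`. -/
noncomputable def erfc (z : ℝ) : ℝ :=
  2 / Real.sqrt π * ∫ t in Set.Ioi z, Real.exp (-t ^ 2)

section aux
open Set

lemma integral_exp_neg_mul_Ioi' {b : ℝ} (hb : 0 < b) (x : ℝ) :
    ∫ y in Ioi x, Real.exp (-(b * y)) = Real.exp (-(b * x)) / b := by
  have h := integral_comp_mul_left_Ioi (fun u => Real.exp (-u)) x hb
  simp only [smul_eq_mul] at h
  rw [h, integral_exp_neg_Ioi]
  rw [inv_mul_eq_div]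

lemma measurable_expPDF (r : ℝ) : Measurable (exponentialPDF r) :=
  (measurable_exponentialPDFReal r).ennreal_ofReal

lemma expMeasure_eq (r : ℝ) :
    expMeasure r = MeasureTheory.volume.withDensity (exponentialPDF r) := rfl

lemma expMeasure_Iio_zero (r : ℝ) : expMeasure r (Iio 0) = 0 := by
  rw [expMeasure_eq, withDensity_apply _ measurableSet_Iio]
  exact lintegral_exponentialPDF_of_nonpos le_rfl

lemma expMeasure_Ici {r : ℝ} (hr : 0 < r) {x : ℝ} (hx : 0 ≤ x) :
    expMeasure r (Ici x) = ENNReal.ofReal (Real.exp (-(r * x))) := by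
  rw [expMeasure_eq, withDensity_apply _ measurableSet_Ici,
    setLIntegral_congr Ioi_ae_eq_Ici.symm,
    setLIntegral_congr_fun measurableSet_Ioi (fun y (hy : x < y) =>
      exponentialPDF_of_nonneg (le_trans hx hy.le)),
    ← ofReal_integral_eq_lintegral_ofReal
      (show IntegrableOn (fun y => r * Real.exp (-(r * y))) (Ioi x) MeasureTheory.volume from by
        simpa [neg_mul, IntegrableOn] using (exp_neg_integrableOn_Ioi x hr).const_mul r)
      (ae_of_all _ fun y => mul_nonneg hr.le (exp_pos _).le),
    integral_const_mul, integral_exp_neg_mul_Ioi' hr x]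
  congr 1
  field_simp

lemma lintegral_expMeasure {r : ℝ} (hr : 0 < r) {g : ℝ → ℝ} (hg : Measurable g)
    (hg0 : ∀ x, 0 ≤ g x)
    (hint : IntegrableOn (fun x => r * Real.exp (-(r * x)) * g x) (Ioi 0)) :
    ∫⁻ x, ENNReal.ofReal (g x) ∂(expMeasure r)
      = ENNReal.ofReal (∫ x in Ioi 0, r * Real.exp (-(r * x)) * g x) := by
  rw [expMeasure_eq, lintegral_withDensity_eq_lintegral_mul _ (measurable_expPDF r)
      hg.ennreal_ofReal, ← lintegral_add_compl _ (measurableSet_Ioi (a := (0:ℝ)))]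
  have h2 : ∫⁻ x in (Ioi (0:ℝ))ᶜ, (exponentialPDF r * fun x => ENNReal.ofReal (g x)) x = 0 := by
    rw [compl_Ioi, setLIntegral_congr Iio_ae_eq_Iic.symm]
    calc ∫⁻ x in Iio (0:ℝ), (exponentialPDF r * fun x => ENNReal.ofReal (g x)) x
        = ∫⁻ _x in Iio (0:ℝ), 0 := setLIntegral_congr_fun measurableSet_Iio
          (fun y (hy : y < 0) => by simp [exponentialPDF_of_neg hy])
      _ = 0 := lintegral_zero
  have h1 : ∫⁻ x in Ioi (0:ℝ), (exponentialPDF r * fun x => ENNReal.ofReal (g x)) x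
      = ∫⁻ x in Ioi (0:ℝ), ENNReal.ofReal (r * Real.exp (-(r * x)) * g x) :=
    setLIntegral_congr_fun measurableSet_Ioi (fun y (hy : (0:ℝ) < y) => by
      simp only [Pi.mul_apply, exponentialPDF_of_nonneg hy.le,
        ← ENNReal.ofReal_mul (mul_nonneg hr.le (exp_pos _).le)])
  rw [h2, add_zero, h1,
    ← ofReal_integral_eq_lintegral_ofReal hint
      (ae_of_all _ fun y => mul_nonneg (mul_nonneg hr.le (exp_pos _).le) (hg0 y))]

lemma integral_comp_add_right_Ioi' (g : ℝ → ℝ) (a d : ℝ) :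
    ∫ x in Ioi a, g (x + d) = ∫ x in Ioi (a + d), g x := by
  rw [← integral_indicator measurableSet_Ioi, ← integral_indicator measurableSet_Ioi,
    ← integral_add_right_eq_self ((Ioi (a + d)).indicator g) d]
  congr 1
  ext x
  simp only [Set.indicator_apply, mem_Ioi]
  by_cases h : a < x
  · rw [if_pos h, if_pos (by linarith)]
  · rw [if_neg h, if_neg (by intro hh; exact h (by linarith))]

lemma integral_exp_neg_mul_sq_Ioi' {a : ℝ} (ha : 0 < a) (s : ℝ) :
    ∫ u in Ioi s, Real.exp (-(a * u ^ 2))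
      = (Real.sqrt a)⁻¹ * ∫ t in Ioi (Real.sqrt a * s), Real.exp (-t ^ 2) := by
  have h := integral_comp_mul_left_Ioi (fun t => Real.exp (-t ^ 2)) s (Real.sqrt_pos.mpr ha)
  simp only [smul_eq_mul] at h
  rw [← h]
  refine setIntegral_congr_fun measurableSet_Ioi fun x _ => ?_
  rw [mul_pow, Real.sq_sqrt ha.le]

end aux

set_option maxHeartbeats 2000000 in
/-- **Survival probability of equations (A.2)–(A.3) in Appendix A.**
For independent exponential random variables `U, V, W` with means `β₁, β₂, β₃ > 0` and
constants `c₁ > 0`, `c₂ ≥ 0`, `c₃ ≥ 0`,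
`P(U ≥ c₁·V² + c₂·W + c₃) = [β₁/(2β₂(β₁ + c₂β₃))]·√(πβ₁/c₁)·exp(β₁/(4β₂²c₁) − c₃/β₁)
  · erfc((1/(2β₂))·√(β₁/c₁))`. -/
theorem survival_prob_exponential_vs_square_echo
    {Ω : Type*} [MeasurableSpace Ω] (P : Measure Ω) [IsProbabilityMeasure P]
    (U V W : Ω → ℝ) (hU : Measurable U) (hV : Measurable V) (hW : Measurable W)
    (β₁ β₂ β₃ : ℝ) (hβ₁ : 0 < β₁) (hβ₂ : 0 < β₂) (hβ₃ : 0 < β₃)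
    (hlawU : Measure.map U P = expMeasure (1 / β₁))
    (hlawV : Measure.map V P = expMeasure (1 / β₂))
    (hlawW : Measure.map W P = expMeasure (1 / β₃))
    (hindep : iIndepFun ![U, V, W] P)
    (c₁ c₂ c₃ : ℝ) (hc₁ : 0 < c₁) (hc₂ : 0 ≤ c₂) (hc₃ : 0 ≤ c₃) :
    P {ω | c₁ * (V ω) ^ 2 + c₂ * W ω + c₃ ≤ U ω}
      = ENNReal.ofReal (β₁ / (2 * β₂ * (β₁ + c₂ * β₃)) * Real.sqrt (π * β₁ / c₁)
          * Real.exp (β₁ / (4 * β₂ ^ 2 * c₁) - c₃ / β₁)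
          * erfc (1 / (2 * β₂) * Real.sqrt (β₁ / c₁))) := by
  have hmeas : ∀ i, Measurable (![U, V, W] i) := fun i => by fin_cases i <;> assumption
  set a : ℝ := c₁ / β₁ with ha_def
  have ha : 0 < a := div_pos hc₁ hβ₁
  set b : ℝ := c₂ / β₁ with hb_def
  have hb : 0 ≤ b := div_nonneg hc₂ hβ₁.le
  set s : ℝ := 1 / (2 * a * β₂) with hs_def
  set X : Ω → ℝ := fun ω => c₁ * (V ω) ^ 2 + c₂ * W ω + c₃ with hXdef
  have hX : Measurable X := (((hV.pow_const 2).const_mul c₁).add (hW.const_mul c₂)).add_const c₃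
  have hβ₁' : (0:ℝ) < 1 / β₁ := by positivity
  have hβ₂' : (0:ℝ) < 1 / β₂ := by positivity
  have hβ₃' : (0:ℝ) < 1 / β₃ := by positivity
  -- independence of X and U
  have hVWU : IndepFun (fun ω => (V ω, W ω)) U P := by
    have h := hindep.indepFun_prodMk hmeas 1 2 0 (by decide) (by decide)
    simpa using h
  have hφ : Measurable fun p : ℝ × ℝ => c₁ * p.1 ^ 2 + c₂ * p.2 + c₃ :=
    (((measurable_fst.pow_const 2).const_mul c₁).add (measurable_snd.const_mul c₂)).add_const c₃
  have hXU : IndepFun X U P := hVWU.comp hφ measurable_id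
  have hmap : P.map (fun ω => (X ω, U ω)) = (P.map X).prod (P.map U) :=
    (indepFun_iff_map_prod_eq_prod_map_map hX.aemeasurable hU.aemeasurable).mp hXU
  have hsle : MeasurableSet {p : ℝ × ℝ | p.1 ≤ p.2} :=
    measurableSet_le measurable_fst measurable_snd
  have hev : P {ω | c₁ * (V ω) ^ 2 + c₂ * W ω + c₃ ≤ U ω}
      = ∫⁻ x, expMeasure (1 / β₁) (Set.Ici x) ∂(P.map X) := by
    have h0 : {ω | c₁ * (V ω) ^ 2 + c₂ * W ω + c₃ ≤ U ω}
        = (fun ω => (X ω, U ω)) ⁻¹' {p : ℝ × ℝ | p.1 ≤ p.2} := rfl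
    rw [h0, ← Measure.map_apply (hX.prodMk hU) hsle, hmap, Measure.prod_apply hsle, hlawU]
    rfl
  have hF : Measurable fun x : ℝ => expMeasure (1 / β₁) (Set.Ici x) :=
    Antitone.measurable fun u v huv => measure_mono (Set.Ici_subset_Ici.mpr huv)
  rw [hev, lintegral_map hF hX]
  -- a.e. nonnegativity of V and W
  have hV0 : ∀ᵐ ω ∂P, 0 ≤ V ω := by
    rw [ae_iff]
    have h1 : {ω | ¬ 0 ≤ V ω} = V ⁻¹' Set.Iio 0 := by ext ω; simp [not_le]
    rw [h1, ← Measure.map_apply hV measurableSet_Iio, hlawV, expMeasure_Iio_zero]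
  have hW0 : ∀ᵐ ω ∂P, 0 ≤ W ω := by
    rw [ae_iff]
    have h1 : {ω | ¬ 0 ≤ W ω} = W ⁻¹' Set.Iio 0 := by ext ω; simp [not_le]
    rw [h1, ← Measure.map_apply hW measurableSet_Iio, hlawW, expMeasure_Iio_zero]
  -- rewrite survival function a.e.
  have hcong : ∀ᵐ ω ∂P, expMeasure (1 / β₁) (Set.Ici (X ω))
      = ENNReal.ofReal (Real.exp (-(a * (V ω) ^ 2)))
        * ENNReal.ofReal (Real.exp (-(b * W ω)))
        * ENNReal.ofReal (Real.exp (-(c₃ / β₁))) := by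
    filter_upwards [hV0, hW0] with ω h1 h2
    have hx0 : 0 ≤ X ω :=
      add_nonneg (add_nonneg (mul_nonneg hc₁.le (sq_nonneg _)) (mul_nonneg hc₂ h2)) hc₃
    rw [expMeasure_Ici hβ₁' hx0, ← ENNReal.ofReal_mul (by positivity),
      ← ENNReal.ofReal_mul (by positivity), ← Real.exp_add, ← Real.exp_add]
    congr 2
    rw [hXdef, ha_def, hb_def]
    field_simp
    ring
  rw [lintegral_congr_ae hcong, lintegral_mul_const' _ _ ENNReal.ofReal_ne_top]
  have hφV : Measurable fun v : ℝ => ENNReal.ofReal (Real.exp (-(a * v ^ 2))) :=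
    (((measurable_id.pow_const 2).const_mul a).neg.exp).ennreal_ofReal
  have hφW : Measurable fun w : ℝ => ENNReal.ofReal (Real.exp (-(b * w))) :=
    ((measurable_id.const_mul b).neg.exp).ennreal_ofReal
  have hindepVW : IndepFun (fun ω => ENNReal.ofReal (Real.exp (-(a * (V ω) ^ 2))))
      (fun ω => ENNReal.ofReal (Real.exp (-(b * W ω)))) P := by
    have h := (hindep.indepFun (show (1 : Fin 3) ≠ 2 by decide)).comp hφV hφW
    simpa [Function.comp_def] using h
  have hmul := lintegral_mul_eq_lintegral_mul_lintegral_of_indepFun''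
      (f := fun ω => ENNReal.ofReal (Real.exp (-(a * (V ω) ^ 2))))
      (g := fun ω => ENNReal.ofReal (Real.exp (-(b * W ω))))
      (hφV.comp hV).aemeasurable (hφW.comp hW).aemeasurable hindepVW
  rw [hmul]
  have hfunV : (fun v : ℝ => (1 / β₂) * Real.exp (-((1 / β₂) * v)) * Real.exp (-(a * v ^ 2)))
      = fun v => ((1 / β₂) * Real.exp (a * s ^ 2)) * Real.exp (-(a * (v + s) ^ 2)) := by
    funext v
    rw [mul_assoc, mul_assoc, ← Real.exp_add, ← Real.exp_add]
    congr 2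
    rw [hs_def]
    field_simp
    ring
  have hLV : ∫⁻ ω, ENNReal.ofReal (Real.exp (-(a * (V ω) ^ 2))) ∂P
      = ENNReal.ofReal (∫ v in Set.Ioi 0,
          (1 / β₂) * Real.exp (-((1 / β₂) * v)) * Real.exp (-(a * v ^ 2))) := by
    rw [← lintegral_map hφV hV, hlawV]
    refine lintegral_expMeasure hβ₂' (((measurable_id.pow_const 2).const_mul a).neg.exp)
      (fun x => (exp_pos _).le) ?_
    rw [hfunV]
    have hshift : Integrable (fun v : ℝ => Real.exp (-(a * (v + s) ^ 2))) := by
      simpa [neg_mul] using (integrable_exp_neg_mul_sq ha).comp_add_right s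
    exact (hshift.const_mul _).integrableOn
  have h0 : (0:ℝ) < 1 / β₃ + b := by positivity
  have hfunW : (fun w : ℝ => (1 / β₃) * Real.exp (-((1 / β₃) * w)) * Real.exp (-(b * w)))
      = fun w => (1 / β₃) * Real.exp (-((1 / β₃ + b) * w)) := by
    funext w
    rw [mul_assoc, ← Real.exp_add]
    congr 2
    ring
  have hLW : ∫⁻ ω, ENNReal.ofReal (Real.exp (-(b * W ω))) ∂P
      = ENNReal.ofReal (∫ w in Set.Ioi 0,
          (1 / β₃) * Real.exp (-((1 / β₃) * w)) * Real.exp (-(b * w))) := by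
    rw [← lintegral_map hφW hW, hlawW]
    refine lintegral_expMeasure hβ₃' ((measurable_id.const_mul b).neg.exp)
      (fun x => (exp_pos _).le) ?_
    rw [hfunW]
    exact (show IntegrableOn (fun w : ℝ => (1 / β₃) * Real.exp (-((1 / β₃ + b) * w)))
        (Set.Ioi 0) MeasureTheory.volume from by
      simpa only [neg_mul, IntegrableOn] using (exp_neg_integrableOn_Ioi 0 h0).const_mul (1 / β₃))
  have hsqa : (0:ℝ) < Real.sqrt a := Real.sqrt_pos.mpr ha
  have hsa : Real.sqrt a * Real.sqrt a = a := Real.mul_self_sqrt ha.le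
  have hβ₁₂₃ : (0:ℝ) < β₁ + c₂ * β₃ := by positivity
  have hIV : ∫ v in Set.Ioi 0, (1 / β₂) * Real.exp (-((1 / β₂) * v)) * Real.exp (-(a * v ^ 2))
      = (1 / β₂) * Real.exp (a * s ^ 2)
        * ((Real.sqrt a)⁻¹ * ∫ t in Set.Ioi (Real.sqrt a * s), Real.exp (-t ^ 2)) := by
    rw [hfunV, integral_const_mul]
    congr 1
    have h1 := integral_comp_add_right_Ioi' (fun u => Real.exp (-(a * u ^ 2))) 0 s
    rw [h1, zero_add, integral_exp_neg_mul_sq_Ioi' ha s]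
  have hIW : ∫ w in Set.Ioi 0, (1 / β₃) * Real.exp (-((1 / β₃) * w)) * Real.exp (-(b * w))
      = β₁ / (β₁ + c₂ * β₃) := by
    rw [hfunW, integral_const_mul, integral_exp_neg_mul_Ioi' h0 0, mul_zero, neg_zero,
      Real.exp_zero, hb_def]
    field_simp
  rw [hLV, hLW, hIV, hIW]
  have hJ : 0 ≤ ∫ t in Set.Ioi (Real.sqrt a * s), Real.exp (-t ^ 2) :=
    setIntegral_nonneg measurableSet_Ioi fun t _ => (exp_pos _).le
  rw [← ENNReal.ofReal_mul (by positivity), ← ENNReal.ofReal_mul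
    (mul_nonneg (mul_nonneg (mul_nonneg (by positivity) (exp_pos _).le)
      (mul_nonneg (by positivity) hJ)) (by positivity))]
  congr 1
  -- real-number identity
  have hsinv : Real.sqrt (β₁ / c₁) = (Real.sqrt a)⁻¹ := by
    rw [ha_def, show β₁ / c₁ = (c₁ / β₁)⁻¹ by rw [inv_div], Real.sqrt_inv]
  have hz : Real.sqrt a * s = 1 / (2 * β₂) * Real.sqrt (β₁ / c₁) := by
    rw [hsinv, hs_def]
    field_simp
    nlinarith [hsa]
  have hexp : a * s ^ 2 = β₁ / (4 * β₂ ^ 2 * c₁) := by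
    rw [hs_def, ha_def]
    field_simp
    ring
  have hsqpi : Real.sqrt (π * β₁ / c₁) = Real.sqrt π * (Real.sqrt a)⁻¹ := by
    rw [show π * β₁ / c₁ = π * (β₁ / c₁) by ring, Real.sqrt_mul pi_pos.le, hsinv]
  have hsqpi0 : (0:ℝ) < Real.sqrt π := Real.sqrt_pos.mpr pi_pos
  have herfc : erfc (1 / (2 * β₂) * Real.sqrt (β₁ / c₁))
      = 2 / Real.sqrt π * ∫ t in Set.Ioi (Real.sqrt a * s), Real.exp (-t ^ 2) := by
    rw [← hz, erfc]
  rw [herfc, hsqpi, sub_eq_add_neg, Real.exp_add, ← hexp]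
  field_simp
end

section
/- In the setting of Theorem 1 with a common transmit SNR γ_c = γ_r = γ, write P_out(γ) for the outage probability P(max(γ₁,γ₂) < γ_th) + P(γ₁ ≥ γ_th and max(γ₃,γ₂) < γ_th) as a function of γ, and let θ₁* = γ_th/(a_f − a_n·γ_th). Then lim_{γ→∞} γ·P_out(γ) = (θ₁*/β_SDf) · { 1 − [β_SR/(2β_RR(β_SR + β_LI·ω·θ₁*))] · √(πβ_SR/(δ·θ₁*)) · exp(β_SR/(4β_RR²·δ·θ₁*)) · erfc((1/(2β_RR))·√(β_SR/(δ·θ₁*))) }. -/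
open MeasureTheory ProbabilityTheory Real Filter

open scoped NNReal ENNReal Topology

section Aux

open Set

lemma aux_integral_Ioi_comp_add_right (f : ℝ → ℝ) (a c : ℝ) :
    ∫ x in Set.Ioi a, f (x + c) = ∫ x in Set.Ioi (a + c), f x := by
  have h := (measurePreserving_add_right (volume : Measure ℝ) c).setIntegral_preimage_emb
    (measurableEmbedding_addRight c) f (Ioi (a + c))
  simpa using h

lemma aux_integral_exp_neg_mul_Ioi_zero {r : ℝ} (hr : 0 < r) :
    ∫ x in Set.Ioi (0:ℝ), Real.exp (-(r * x)) = 1 / r := by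
  have h := integral_comp_mul_left_Ioi (fun x => Real.exp (-x)) 0 hr
  simp only [mul_zero] at h
  calc ∫ x in Set.Ioi (0:ℝ), Real.exp (-(r * x)) = r⁻¹ • ∫ x in Set.Ioi (0:ℝ), Real.exp (-x) := h
    _ = 1 / r := by rw [integral_exp_neg_Ioi_zero]; simp [one_div]

/-- Laplace transform of the exponential density. -/
lemma aux_laplace_exp_density {β b : ℝ} (hβ : 0 < β) (hb : 0 ≤ b) :
    ∫ x in Set.Ioi (0:ℝ), (1/β) * Real.exp (-(x/β)) * Real.exp (-(b*x)) = 1 / (1 + b * β) := by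
  have h1 : ∀ x : ℝ, (1/β) * Real.exp (-(x/β)) * Real.exp (-(b*x))
      = (1/β) * Real.exp (-((1/β + b) * x)) := by
    intro x
    rw [mul_assoc, ← Real.exp_add]
    ring_nf
  rw [MeasureTheory.setIntegral_congr_fun measurableSet_Ioi (fun x _ => h1 x),
    integral_const_mul, aux_integral_exp_neg_mul_Ioi_zero (by positivity)]
  field_simp

/-- The key Gaussian-type integral giving the erfc expression. -/
lemma aux_gauss_exp_density {β c : ℝ} (hβ : 0 < β) (hc : 0 < c) :
    ∫ x in Set.Ioi (0:ℝ), (1/β) * Real.exp (-(x/β)) * Real.exp (-(c*x^2))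
      = 1/(2*β) * Real.sqrt (π/c) * Real.exp (1/(4*c*β^2)) * erfc (1/(2*β*Real.sqrt c)) := by
  have hsc : 0 < Real.sqrt c := Real.sqrt_pos.2 hc
  set d : ℝ := 1/(2*β*Real.sqrt c) with hd
  have hsq : Real.sqrt c * Real.sqrt c = c := Real.mul_self_sqrt hc.le
  have h1 : ∀ x : ℝ, (1/β) * Real.exp (-(x/β)) * Real.exp (-(c*x^2))
      = (1/β) * Real.exp (1/(4*c*β^2)) * Real.exp (-(Real.sqrt c * x + d)^2) := by
    intro x
    rw [mul_assoc, mul_assoc, ← Real.exp_add, ← Real.exp_add]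
    congr 1
    have : (Real.sqrt c * x + d)^2 = (Real.sqrt c)^2 * x^2 + 2 * Real.sqrt c * d * x + d^2 := by
      ring
    rw [Real.sq_sqrt hc.le] at this
    rw [this]
    have h2d : 2 * Real.sqrt c * d = 1/β := by
      rw [hd]; field_simp
    have hd2 : d^2 = 1/(4*c*β^2) := by
      rw [hd]; rw [div_pow]; congr 1
      · ring
      · rw [mul_pow, mul_pow, Real.sq_sqrt hc.le]; ring
    rw [h2d, hd2]; ring
  rw [MeasureTheory.setIntegral_congr_fun measurableSet_Ioi (fun x _ => h1 x),
    integral_const_mul]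
  have h3 : ∫ x in Set.Ioi (0:ℝ), Real.exp (-(Real.sqrt c * x + d)^2)
      = (Real.sqrt c)⁻¹ * ∫ u in Set.Ioi d, Real.exp (-u^2) := by
    have h4 := integral_comp_mul_left_Ioi (fun u => Real.exp (-(u + d)^2)) 0 hsc
    simp only [mul_zero, smul_eq_mul] at h4
    rw [show (fun x : ℝ => Real.exp (-(Real.sqrt c * x + d)^2))
        = fun x : ℝ => Real.exp (-((Real.sqrt c * x) + d)^2) from rfl]
    rw [h4, aux_integral_Ioi_comp_add_right (fun u => Real.exp (-u^2)) 0 d, zero_add]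
  rw [h3, erfc]
  have hπ : Real.sqrt π > 0 := Real.sqrt_pos.2 Real.pi_pos
  have hs : Real.sqrt (π/c) = Real.sqrt π / Real.sqrt c := Real.sqrt_div Real.pi_pos.le c
  rw [hs]
  field_simp

lemma aux_exponentialPDFReal_eq {β : ℝ} (hβ : 0 < β) (x : ℝ) :
    ProbabilityTheory.exponentialPDFReal (1/β) x
      = if 0 ≤ x then (1/β) * Real.exp (-(x/β)) else 0 := by
  rw [ProbabilityTheory.exponentialPDFReal, ProbabilityTheory.gammaPDFReal]
  simp only [rpow_one, Real.Gamma_one, div_one, sub_self, rpow_zero, mul_one]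
  split_ifs with h
  · congr 2; field_simp
  · rfl

lemma aux_expMeasure_eq_withDensity (r : ℝ) :
    ProbabilityTheory.expMeasure r = volume.withDensity (ProbabilityTheory.exponentialPDF r) :=
  rfl

lemma aux_expMeasure_Iio {β s : ℝ} (hβ : 0 < β) (hs : 0 ≤ s) :
    ProbabilityTheory.expMeasure (1/β) (Set.Iio s) = ENNReal.ofReal (1 - Real.exp (-(s/β))) := by
  rw [aux_expMeasure_eq_withDensity, withDensity_apply _ measurableSet_Iio,
    setLIntegral_congr Iio_ae_eq_Iic,
    ProbabilityTheory.lintegral_exponentialPDF_eq_antiDeriv (by positivity) s, if_pos hs]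
  have : (1/β) * s = s/β := by ring
  rw [this]

lemma aux_expMeasure_Iio_zero (r : ℝ) : ProbabilityTheory.expMeasure r (Set.Iio 0) = 0 := by
  rw [aux_expMeasure_eq_withDensity, withDensity_apply _ measurableSet_Iio]
  exact ProbabilityTheory.lintegral_exponentialPDF_of_nonpos le_rfl

lemma aux_integral_expMeasure {β : ℝ} (hβ : 0 < β) (g : ℝ → ℝ) :
    ∫ x, g x ∂(ProbabilityTheory.expMeasure (1/β))
      = ∫ x in Set.Ioi 0, (1/β) * Real.exp (-(x/β)) * g x := by
  have hfn : Measurable (fun x => Real.toNNReal (ProbabilityTheory.exponentialPDFReal (1/β) x)) :=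
    (ProbabilityTheory.measurable_exponentialPDFReal _).real_toNNReal
  have h0 : ProbabilityTheory.expMeasure (1/β)
      = volume.withDensity
        (fun x => ((Real.toNNReal (ProbabilityTheory.exponentialPDFReal (1/β) x) : ℝ≥0) : ℝ≥0∞)) :=
    rfl
  rw [h0, integral_withDensity_eq_integral_smul hfn g]
  have hfun : (fun x => Real.toNNReal (ProbabilityTheory.exponentialPDFReal (1/β) x) • g x)
      = Set.indicator (Set.Ici 0) (fun x => (1/β) * Real.exp (-(x/β)) * g x) := by
    funext x
    rw [NNReal.smul_def, smul_eq_mul,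
      Real.coe_toNNReal _ (ProbabilityTheory.exponentialPDFReal_nonneg (by positivity) x),
      aux_exponentialPDFReal_eq hβ]
    by_cases h : (0:ℝ) ≤ x
    · rw [if_pos h, Set.indicator_of_mem (Set.mem_Ici.2 h)]
    · rw [if_neg h, Set.indicator_of_notMem (by simpa using h), zero_mul]
  rw [hfun, integral_indicator measurableSet_Ici, integral_Ici_eq_integral_Ioi]

lemma aux_ratio2_iff {an af γth θ₁s x g : ℝ} (han : 0 < an) (haf : 0 < af - an * γth)
    (hθ₁s : θ₁s = γth / (af - an * γth)) (hx : 0 ≤ x) (hg : 0 < g) :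
    af * x * g / (an * x * g + 1) < γth ↔ x < θ₁s / g := by
  have hD : 0 < an * x * g + 1 := by positivity
  rw [div_lt_iff₀ hD, hθ₁s, div_div, lt_div_iff₀ (by positivity)]
  constructor <;> intro h <;> nlinarith

lemma aux_ratio1_iff {an af γth θ₁s δ w x v l g : ℝ} (han : 0 < an) (haf : 0 < af - an * γth)
    (hθ₁s : θ₁s = γth / (af - an * γth)) (hδ : 0 < δ) (hw : 0 ≤ w)
    (hx : 0 ≤ x) (hl : 0 ≤ l) (hg : 0 < g) :
    af * x * g / (an * x * g + v^2 * δ * g + l * w * g + 1) < γth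
      ↔ x < θ₁s * (δ * v^2 + w * l) + θ₁s / g := by
  have hD : 0 < an * x * g + v^2 * δ * g + l * w * g + 1 := by positivity
  have key : θ₁s * (δ * v^2 + w * l) + θ₁s / g
      = γth * (v^2 * δ * g + l * w * g + 1) / ((af - an * γth) * g) := by
    rw [hθ₁s]; field_simp
  rw [div_lt_iff₀ hD, key, lt_div_iff₀ (by positivity)]
  constructor <;> intro h <;> nlinarith

lemma aux_tendsto_const_div_atTop (k : ℝ) : Tendsto (fun g : ℝ => k / g) atTop (𝓝 0) :=
  tendsto_const_nhds.div_atTop tendsto_id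

lemma aux_lim_exp (k : ℝ) (hk : 0 < k) :
    Tendsto (fun g : ℝ => g * (1 - Real.exp (-(k/g)))) atTop (𝓝 k) := by
  have hslope : Tendsto (slope Real.exp 0) (𝓝[≠] 0) (𝓝 1) := by
    have := (Real.hasDerivAt_exp 0)
    rw [hasDerivAt_iff_tendsto_slope] at this
    simpa using this
  have h1 : Tendsto (fun g : ℝ => -(k/g)) atTop (𝓝[≠] (0:ℝ)) := by
    rw [tendsto_nhdsWithin_iff]
    constructor
    · simpa using (aux_tendsto_const_div_atTop k).neg
    · filter_upwards [eventually_gt_atTop (0:ℝ)] with g hg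
      have : 0 < k / g := by positivity
      simp only [Set.mem_compl_iff, Set.mem_singleton_iff]
      intro h; rw [neg_eq_zero] at h; linarith
  have h2 : Tendsto (fun g : ℝ => k * slope Real.exp 0 (-(k/g))) atTop (𝓝 k) := by
    have := (hslope.comp h1).const_mul k
    simpa using this
  refine h2.congr' ?_
  filter_upwards [eventually_gt_atTop (0:ℝ)] with g hg
  rw [slope_def_field, Real.exp_zero, sub_zero, mul_div_assoc',
    div_eq_iff (neg_ne_zero.2 (div_pos hk hg).ne')]
  have hg' : g ≠ 0 := hg.ne'
  field_simp
  ring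

end Aux

/-- **Corollary 1 (precise limit form): asymptotic outage probability of the far IoT
device at high SNR**, with common transmit SNR `γ_c = γ_r = g → ∞`. -/
theorem asymptotic_outage_far_device
    {Ω : Type*} [MeasurableSpace Ω] (P : Measure Ω) [IsProbabilityMeasure P]
    (βSR βRR βLI βSDf βRDf : ℝ)
    (hβSR : 0 < βSR) (hβRR : 0 < βRR) (hβLI : 0 < βLI) (hβSDf : 0 < βSDf) (hβRDf : 0 < βRDf)
    (rSR rSDf rRDf rLI V : Ω → ℝ)
    (hrSR : Measurable rSR) (hrSDf : Measurable rSDf) (hrRDf : Measurable rRDf)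
    (hrLI : Measurable rLI) (hV : Measurable V)
    (hlawSR : Measure.map rSR P = expMeasure (1 / βSR))
    (hlawSDf : Measure.map rSDf P = expMeasure (1 / βSDf))
    (hlawRDf : Measure.map rRDf P = expMeasure (1 / βRDf))
    (hlawLI : Measure.map rLI P = expMeasure (1 / βLI))
    (hlawV : Measure.map V P = expMeasure (1 / βRR))
    (hindep : iIndepFun ![rSR, rSDf, rRDf, rLI, V] P)
    (δ w an af γth : ℝ)
    (hδ : δ ∈ Set.Ioc (0 : ℝ) 1) (hw : w = 0 ∨ w = 1)
    (han : 0 < an) (hanf : an < af) (hsum : an + af = 1)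
    (hγth : 0 < γth) (hdec : an * γth < af)
    (θ₁s : ℝ) (hθ₁s : θ₁s = γth / (af - an * γth))
    (Pout : ℝ → ℝ)
    (hPout : ∀ g : ℝ,
      Pout g =
        (P {ω | max (af * rSR ω * g /
                    (an * rSR ω * g + (V ω) ^ 2 * δ * g + rLI ω * w * g + 1))
                 (af * rSDf ω * g / (an * rSDf ω * g + 1)) < γth}).toReal
        + (P {ω | γth ≤ af * rSR ω * g /
                    (an * rSR ω * g + (V ω) ^ 2 * δ * g + rLI ω * w * g + 1)
               ∧ max (af * rRDf ω * g / (an * rRDf ω * g + 1))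
                     (af * rSDf ω * g / (an * rSDf ω * g + 1)) < γth}).toReal) :
    Tendsto (fun g : ℝ => g * Pout g) atTop
      (nhds (θ₁s / βSDf
        * (1 - βSR / (2 * βRR * (βSR + βLI * w * θ₁s))
            * Real.sqrt (π * βSR / (δ * θ₁s))
            * Real.exp (βSR / (4 * βRR ^ 2 * δ * θ₁s))
            * erfc (1 / (2 * βRR) * Real.sqrt (βSR / (δ * θ₁s)))))) := by
  obtain ⟨hδ0, hδ1⟩ := hδ
  have hw0 : 0 ≤ w := by rcases hw with h|h <;> simp [h]
  have haf : 0 < af - an * γth := by linarith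
  have hθ : 0 < θ₁s := by rw [hθ₁s]; positivity
  -- a.e. nonnegativity of the exponential variables
  have aeNonneg : ∀ (f : Ω → ℝ) (r : ℝ), Measurable f → Measure.map f P = expMeasure r →
      ∀ᵐ ω ∂P, 0 ≤ f ω := by
    intro f r hf hlaw
    have h0 : P (f ⁻¹' (Set.Iio 0)) = 0 := by
      rw [← Measure.map_apply hf measurableSet_Iio, hlaw, aux_expMeasure_Iio_zero]
    rw [ae_iff]
    convert h0 using 2
    ext ω; simp [not_le, Set.mem_preimage]
  have haeSR := aeNonneg rSR _ hrSR hlawSR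
  have haeLI := aeNonneg rLI _ hrLI hlawLI
  have haeSDf := aeNonneg rSDf _ hrSDf hlawSDf
  have haeRDf := aeNonneg rRDf _ hrRDf hlawRDf
  -- the five-variable family
  have hf5m : ∀ i, Measurable (![rSR, rSDf, rRDf, rLI, V] i) := by
    intro i; fin_cases i <;> assumption
  -- the interference variable Y
  set Y : Ω → ℝ := fun ω => θ₁s * (δ * (V ω)^2 + w * rLI ω) with hYdef
  have hYm : Measurable Y := by
    apply Measurable.const_mul
    exact ((hV.pow_const 2).const_mul δ).add (hrLI.const_mul w)
  have haeY : ∀ᵐ ω ∂P, 0 ≤ Y ω := by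
    filter_upwards [haeLI] with ω h
    have h2 := sq_nonneg (V ω)
    have : 0 ≤ δ * (V ω)^2 + w * rLI ω := by positivity
    positivity
  -- independence facts
  have hIndYSR : IndepFun Y rSR P := by
    have h := hindep.indepFun_finset {3,4} {0} (by decide) hf5m
    have h2 := h.comp
      (φ := fun p : (({3,4} : Finset (Fin 5)) → ℝ) =>
        θ₁s * (δ * (p ⟨4, by decide⟩)^2 + w * p ⟨3, by decide⟩))
      (ψ := fun p : (({0} : Finset (Fin 5)) → ℝ) => p ⟨0, by decide⟩)
      (by
        have m4 : Measurable (fun p : (({3,4} : Finset (Fin 5)) → ℝ) => p ⟨4, by decide⟩) :=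
          measurable_pi_apply _
        have m3 : Measurable (fun p : (({3,4} : Finset (Fin 5)) → ℝ) => p ⟨3, by decide⟩) :=
          measurable_pi_apply _
        exact (((m4.pow_const 2).const_mul δ).add (m3.const_mul w)).const_mul θ₁s)
      (measurable_pi_apply _ : Measurable (fun p : (({0} : Finset (Fin 5)) → ℝ) => p ⟨0, by decide⟩))
    exact h2
  have hIndVLI : IndepFun V rLI P := hindep.indepFun (show (4 : Fin 5) ≠ 3 by decide)
  have hIndRDfSDf : IndepFun rRDf rSDf P := hindep.indepFun (show (2 : Fin 5) ≠ 1 by decide)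
  set Z : Ω → ℝ × ℝ × ℝ := fun ω => (rSR ω, rLI ω, V ω) with hZdef
  have hZm : Measurable Z := hrSR.prodMk (hrLI.prodMk hV)
  have hIndZ2 : IndepFun Z rSDf P := by
    have h := hindep.indepFun_finset {0,3,4} {1} (by decide) hf5m
    have h2 := h.comp
      (φ := fun p : (({0,3,4} : Finset (Fin 5)) → ℝ) =>
        (p ⟨0, by decide⟩, p ⟨3, by decide⟩, p ⟨4, by decide⟩))
      (ψ := fun p : (({1} : Finset (Fin 5)) → ℝ) => p ⟨1, by decide⟩)
      ((measurable_pi_apply _).prodMk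
        ((measurable_pi_apply _).prodMk (measurable_pi_apply _)) : Measurable (fun p : (({0,3,4} : Finset (Fin 5)) → ℝ) =>
          (p ⟨0, by decide⟩, p ⟨3, by decide⟩, p ⟨4, by decide⟩)))
      (measurable_pi_apply _ : Measurable (fun p : (({1} : Finset (Fin 5)) → ℝ) => p ⟨1, by decide⟩))
    exact h2
  have hIndZ32 : IndepFun Z (fun ω => (rRDf ω, rSDf ω)) P := by
    have h := hindep.indepFun_finset {0,3,4} {1,2} (by decide) hf5m
    have h2 := h.comp
      (φ := fun p : (({0,3,4} : Finset (Fin 5)) → ℝ) =>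
        (p ⟨0, by decide⟩, p ⟨3, by decide⟩, p ⟨4, by decide⟩))
      (ψ := fun p : (({1,2} : Finset (Fin 5)) → ℝ) => (p ⟨2, by decide⟩, p ⟨1, by decide⟩))
      ((measurable_pi_apply _).prodMk
        ((measurable_pi_apply _).prodMk (measurable_pi_apply _)) : Measurable (fun p : (({0,3,4} : Finset (Fin 5)) → ℝ) =>
          (p ⟨0, by decide⟩, p ⟨3, by decide⟩, p ⟨4, by decide⟩)))
      ((measurable_pi_apply _).prodMk (measurable_pi_apply _) : Measurable (fun p : (({1,2} : Finset (Fin 5)) → ℝ) => (p ⟨2, by decide⟩, p ⟨1, by decide⟩)))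
    exact h2
  -- the constant M = E[exp(-Y/βSR)]
  set a : ℝ := θ₁s * δ / βSR with hadef
  set b : ℝ := θ₁s * w / βSR with hbdef
  have ha : 0 < a := by rw [hadef]; positivity
  have hb : 0 ≤ b := by rw [hbdef]; positivity
  set M : ℝ := ∫ ω, Real.exp (-(Y ω / βSR)) ∂P with hMdef
  have hexpYm : Measurable (fun ω => Real.exp (-(Y ω / βSR))) :=
    ((hYm.div_const βSR).neg).exp
  have hMint : Integrable (fun ω => Real.exp (-(Y ω / βSR))) P := by
    apply Integrable.mono' (integrable_const (1:ℝ)) hexpYm.aestronglyMeasurable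
    filter_upwards [haeY] with ω h
    rw [Real.norm_eq_abs, Real.abs_exp, Real.exp_le_one_iff, neg_nonpos]
    positivity
  have hM0 : 0 ≤ M := integral_nonneg (fun ω => (Real.exp_pos _).le)
  have hM1 : M ≤ 1 := by
    have h := integral_mono_ae hMint (integrable_const (1:ℝ)) ?_
    · simpa using h
    · filter_upwards [haeY] with ω h
      rw [Real.exp_le_one_iff, neg_nonpos]
      positivity
  have hYsplit : ∀ ω, Real.exp (-(Y ω / βSR))
      = Real.exp (-(a * (V ω)^2)) * Real.exp (-(b * rLI ω)) := by
    intro ω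
    rw [← Real.exp_add]
    congr 1
    rw [hYdef, hadef, hbdef]
    field_simp
    ring
  have hMeq : M = (1/(2*βRR) * Real.sqrt (π/a) * Real.exp (1/(4*a*βRR^2))
      * erfc (1/(2*βRR*Real.sqrt a))) * (1/(1 + b*βLI)) := by
    have hmulV : Measurable (fun x : ℝ => Real.exp (-(a * x^2))) :=
      (((measurable_id.pow_const 2).const_mul a).neg).exp
    have hmulL : Measurable (fun x : ℝ => Real.exp (-(b * x))) :=
      ((measurable_id.const_mul b).neg).exp
    have hsplit : M = ∫ ω, (fun ω => Real.exp (-(a * (V ω)^2))) ω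
        * (fun ω => Real.exp (-(b * rLI ω))) ω ∂P := by
      rw [hMdef]; exact integral_congr_ae (Filter.Eventually.of_forall (fun ω => hYsplit ω))
    have hprod := IndepFun.integral_mul_eq_mul_integral (hIndVLI.comp hmulV hmulL)
      (hmulV.comp hV).aestronglyMeasurable (hmulL.comp hrLI).aestronglyMeasurable
    have hV' : ∫ ω, Real.exp (-(a * (V ω)^2)) ∂P
        = 1/(2*βRR) * Real.sqrt (π/a) * Real.exp (1/(4*a*βRR^2))
          * erfc (1/(2*βRR*Real.sqrt a)) := by
      rw [← integral_map hV.aemeasurable hmulV.aestronglyMeasurable, hlawV,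
        aux_integral_expMeasure hβRR, aux_gauss_exp_density hβRR ha]
    have hL' : ∫ ω, Real.exp (-(b * rLI ω)) ∂P = 1/(1 + b*βLI) := by
      rw [← integral_map hrLI.aemeasurable hmulL.aestronglyMeasurable, hlawLI,
        aux_integral_expMeasure hβLI, aux_laplace_exp_density hβLI hb]
    have hV'' : integral P ((fun x => Real.exp (-(a * x ^ 2))) ∘ V)
        = 1/(2*βRR) * Real.sqrt (π/a) * Real.exp (1/(4*a*βRR^2))
          * erfc (1/(2*βRR*Real.sqrt a)) := hV'
    have hL'' : integral P ((fun x => Real.exp (-(b * x))) ∘ rLI) = 1/(1 + b*βLI) := hL'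
    rw [hsplit]
    show integral P ((fun x => Real.exp (-(a * x ^ 2))) ∘ V
      * (fun x => Real.exp (-(b * x))) ∘ rLI) = _
    rw [hprod, hV'', hL'']
  -- CDF computation for a single exponential variable
  have key2 : ∀ (X : Ω → ℝ) (β : ℝ), Measurable X → Measure.map X P = expMeasure (1/β) →
      0 < β → ∀ s : ℝ, 0 ≤ s →
      P {ω | X ω < s} = ENNReal.ofReal (1 - Real.exp (-(s/β))) := by
    intro X β hX hlaw hβ s hs
    have h : {ω | X ω < s} = X ⁻¹' (Set.Iio s) := rfl
    rw [h, ← Measure.map_apply hX measurableSet_Iio, hlaw, aux_expMeasure_Iio hβ hs]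
  -- the shifted CDF computation for rSR against Y
  have key1 : ∀ t : ℝ, 0 < t →
      P {ω | rSR ω < Y ω + t} = ENNReal.ofReal (1 - Real.exp (-(t/βSR)) * M) := by
    intro t ht
    haveI hexpprob : IsProbabilityMeasure (expMeasure (1/βSR)) :=
      isProbabilityMeasure_expMeasure (by positivity)
    set ν : Measure ℝ := Measure.map Y P with hν
    have hprobν : IsProbabilityMeasure ν := Measure.isProbabilityMeasure_map hYm.aemeasurable
    have haeν : ∀ᵐ y ∂ν, 0 ≤ y := by
      rw [hν, ae_map_iff hYm.aemeasurable (measurableSet_Ici : MeasurableSet {y : ℝ | 0 ≤ y})]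
      exact haeY
    have hmap : Measure.map (fun ω => (Y ω, rSR ω)) P = ν.prod (expMeasure (1/βSR)) := by
      rw [hν, ← hlawSR]
      exact (indepFun_iff_map_prod_eq_prod_map_map hYm.aemeasurable hrSR.aemeasurable).1 hIndYSR
    have hset : MeasurableSet {p : ℝ × ℝ | p.2 < p.1 + t} :=
      measurableSet_lt measurable_snd (measurable_fst.add_const t)
    have h1 : P {ω | rSR ω < Y ω + t}
        = (ν.prod (expMeasure (1/βSR))) {p : ℝ × ℝ | p.2 < p.1 + t} := by
      rw [← hmap, Measure.map_apply (hYm.prodMk hrSR) hset]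
      rfl
    rw [h1, Measure.prod_apply hset]
    have h3 : (fun y => (expMeasure (1/βSR)) (Prod.mk y ⁻¹' {p : ℝ × ℝ | p.2 < p.1 + t}))
        =ᵐ[ν] fun y => ENNReal.ofReal (1 - Real.exp (-((y + t)/βSR))) := by
      filter_upwards [haeν] with y hy
      have h4 : (Prod.mk y ⁻¹' {p : ℝ × ℝ | p.2 < p.1 + t}) = Set.Iio (y + t) := rfl
      rw [h4, aux_expMeasure_Iio hβSR (by linarith)]
    rw [lintegral_congr_ae h3]
    have hexpm : Measurable (fun y : ℝ => Real.exp (-((y + t)/βSR))) :=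
      (((measurable_id.add_const t).div_const βSR).neg).exp
    have hintexp : Integrable (fun y : ℝ => Real.exp (-((y + t)/βSR))) ν := by
      apply Integrable.mono' (integrable_const (1:ℝ)) hexpm.aestronglyMeasurable
      filter_upwards [haeν] with y hy
      rw [Real.norm_eq_abs, Real.abs_exp, Real.exp_le_one_iff, neg_nonpos]
      positivity
    have hint : Integrable (fun y : ℝ => 1 - Real.exp (-((y + t)/βSR))) ν :=
      (integrable_const (1:ℝ)).sub hintexp
    have hnn : 0 ≤ᵐ[ν] (fun y : ℝ => 1 - Real.exp (-((y + t)/βSR))) := by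
      filter_upwards [haeν] with y hy
      have h5 : Real.exp (-((y + t)/βSR)) ≤ 1 := by
        rw [Real.exp_le_one_iff, neg_nonpos]; positivity
      simp only [Pi.zero_apply]
      linarith
    rw [← ofReal_integral_eq_lintegral_ofReal hint hnn]
    congr 1
    rw [integral_sub (integrable_const 1) hintexp, integral_const]
    simp only [probReal_univ, measure_univ, ENNReal.toReal_one, smul_eq_mul, one_mul]
    congr 1
    have hsplitexp : ∀ y : ℝ, Real.exp (-((y + t)/βSR))
        = Real.exp (-(t/βSR)) * Real.exp (-(y/βSR)) := by
      intro y; rw [← Real.exp_add]; congr 1; field_simp; ring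
    simp only [hsplitexp]
    rw [integral_const_mul]
    congr 1
    have hem : Measurable (fun y : ℝ => Real.exp (-(y/βSR))) :=
      ((measurable_id.div_const βSR).neg).exp
    rw [hν, integral_map hYm.aemeasurable hem.aestronglyMeasurable]
  -- the three basic real-valued probability functions
  set qq : ℝ → ℝ := fun g => 1 - Real.exp (-(θ₁s/g/βSR)) * M with hqqdef
  set p2 : ℝ → ℝ := fun g => 1 - Real.exp (-(θ₁s/g/βSDf)) with hp2def
  set p3 : ℝ → ℝ := fun g => 1 - Real.exp (-(θ₁s/g/βRDf)) with hp3def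
  have hexpbd : ∀ u : ℝ, 0 ≤ u → Real.exp (-u) ≤ 1 := by
    intro u hu; rw [Real.exp_le_one_iff, neg_nonpos]; exact hu
  have hqq0 : ∀ g : ℝ, 0 < g → 0 ≤ qq g := by
    intro g hg
    have h1 : Real.exp (-(θ₁s/g/βSR)) ≤ 1 := hexpbd _ (by positivity)
    have h2 : 0 ≤ Real.exp (-(θ₁s/g/βSR)) := (Real.exp_pos _).le
    have := mul_le_one₀ h1 hM0 hM1
    simp only [hqqdef]; linarith
  have hqq1 : ∀ g : ℝ, 0 < g → qq g ≤ 1 := by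
    intro g hg
    have h2 : 0 ≤ Real.exp (-(θ₁s/g/βSR)) * M := mul_nonneg (Real.exp_pos _).le hM0
    simp only [hqqdef]; linarith
  have hp20 : ∀ g : ℝ, 0 < g → 0 ≤ p2 g := by
    intro g hg
    have h1 : Real.exp (-(θ₁s/g/βSDf)) ≤ 1 := hexpbd _ (by positivity)
    simp only [hp2def]; linarith
  have hp30 : ∀ g : ℝ, 0 < g → 0 ≤ p3 g := by
    intro g hg
    have h1 : Real.exp (-(θ₁s/g/βRDf)) ≤ 1 := hexpbd _ (by positivity)
    simp only [hp3def]; linarith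
  -- the decomposition of the outage probability
  have hPoutEq : ∀ g : ℝ, 0 < g → Pout g = p2 g * (qq g + (1 - qq g) * p3 g) := by
    intro g hg
    have hθg : 0 < θ₁s / g := by positivity
    set S1 : Set (ℝ × ℝ × ℝ) :=
      {q | af * q.1 * g / (an * q.1 * g + q.2.2^2 * δ * g + q.2.1 * w * g + 1) < γth}
      with hS1def
    have hS1 : MeasurableSet S1 := by
      apply measurableSet_lt _ measurable_const
      exact ((measurable_fst.const_mul af).mul_const g).div
        (((((measurable_fst.const_mul an).mul_const g).add
          (((measurable_snd.snd.pow_const 2).mul_const δ).mul_const g)).add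
          ((measurable_snd.fst.mul_const w).mul_const g)).add_const 1)
    set S2 : Set ℝ := {x | af * x * g / (an * x * g + 1) < γth} with hS2def
    have hS2 : MeasurableSet S2 :=
      measurableSet_lt (((measurable_id.const_mul af).mul_const g).div
        (((measurable_id.const_mul an).mul_const g).add_const 1)) measurable_const
    have hPB : P (rSDf ⁻¹' S2) = ENNReal.ofReal (p2 g) := by
      have hae : rSDf ⁻¹' S2 =ᵐ[P] {ω | rSDf ω < θ₁s / g} := by
        apply Filter.eventuallyEq_set.2
        filter_upwards [haeSDf] with ω h
        exact aux_ratio2_iff han haf hθ₁s h hg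
      rw [measure_congr hae, key2 rSDf βSDf hrSDf hlawSDf hβSDf _ hθg.le]
    have hPC : P (rRDf ⁻¹' S2) = ENNReal.ofReal (p3 g) := by
      have hae : rRDf ⁻¹' S2 =ᵐ[P] {ω | rRDf ω < θ₁s / g} := by
        apply Filter.eventuallyEq_set.2
        filter_upwards [haeRDf] with ω h
        exact aux_ratio2_iff han haf hθ₁s h hg
      rw [measure_congr hae, key2 rRDf βRDf hrRDf hlawRDf hβRDf _ hθg.le]
    have hPA : P (Z ⁻¹' S1) = ENNReal.ofReal (qq g) := by
      have hae : Z ⁻¹' S1 =ᵐ[P] {ω | rSR ω < Y ω + θ₁s / g} := by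
        apply Filter.eventuallyEq_set.2
        filter_upwards [haeSR, haeLI] with ω h1 h2
        exact aux_ratio1_iff (v := V ω) han haf hθ₁s hδ0 hw0 h1 h2 hg
      rw [measure_congr hae, key1 _ hθg]
    have hAc : P (Z ⁻¹' S1ᶜ) = ENNReal.ofReal (1 - qq g) := by
      rw [Set.preimage_compl, prob_compl_eq_one_sub (hZm hS1), hPA,
        ← ENNReal.ofReal_one, ← ENNReal.ofReal_sub _ (hqq0 g hg)]
    have e1 : {ω | max (af * rSR ω * g /
          (an * rSR ω * g + (V ω) ^ 2 * δ * g + rLI ω * w * g + 1))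
          (af * rSDf ω * g / (an * rSDf ω * g + 1)) < γth}
        = Z ⁻¹' S1 ∩ rSDf ⁻¹' S2 := by
      ext ω
      simp only [Set.mem_setOf_eq, Set.mem_inter_iff, Set.mem_preimage, max_lt_iff,
        hS1def, hS2def]
      try tauto
    have e2 : {ω | γth ≤ af * rSR ω * g /
          (an * rSR ω * g + (V ω) ^ 2 * δ * g + rLI ω * w * g + 1)
          ∧ max (af * rRDf ω * g / (an * rRDf ω * g + 1))
            (af * rSDf ω * g / (an * rSDf ω * g + 1)) < γth}
        = Z ⁻¹' S1ᶜ ∩ ((fun ω => (rRDf ω, rSDf ω)) ⁻¹' (S2 ×ˢ S2)) := by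
      ext ω
      simp only [Set.mem_setOf_eq, Set.mem_inter_iff, Set.mem_preimage, Set.mem_compl_iff,
        Set.mem_prod, max_lt_iff, not_lt, hS1def, hS2def]
      try tauto
    have e3 : ((fun ω => (rRDf ω, rSDf ω)) ⁻¹' (S2 ×ˢ S2))
        = rRDf ⁻¹' S2 ∩ rSDf ⁻¹' S2 := rfl
    rw [hPout g, e1, e2,
      hIndZ2.measure_inter_preimage_eq_mul _ _ hS1 hS2,
      hIndZ32.measure_inter_preimage_eq_mul _ _ hS1.compl (hS2.prod hS2)]
    rw [e3, hIndRDfSDf.measure_inter_preimage_eq_mul _ _ hS2 hS2]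
    rw [hPA, hPB, hPC, hAc]
    rw [ENNReal.toReal_mul, ENNReal.toReal_mul, ENNReal.toReal_mul,
      ENNReal.toReal_ofReal (hqq0 g hg), ENNReal.toReal_ofReal (hp20 g hg),
      ENNReal.toReal_ofReal (hp30 g hg), ENNReal.toReal_ofReal (by linarith [hqq1 g hg])]
    ring
  -- limits
  have hdivdiv : ∀ (β g : ℝ), θ₁s/g/β = (θ₁s/β)/g := by
    intro β g; rw [div_div, div_div, mul_comm]
  have hL2 : Tendsto (fun g : ℝ => g * p2 g) atTop (𝓝 (θ₁s/βSDf)) := by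
    refine (aux_lim_exp (θ₁s/βSDf) (by positivity)).congr ?_
    intro g
    simp only [hp2def, hdivdiv]
  have hq : Tendsto qq atTop (𝓝 (1 - M)) := by
    have h0 : Tendsto (fun g : ℝ => -((θ₁s/βSR)/g)) atTop (𝓝 0) := by
      simpa using (aux_tendsto_const_div_atTop (θ₁s/βSR)).neg
    have h1 : Tendsto (fun g : ℝ => Real.exp (-((θ₁s/βSR)/g))) atTop (𝓝 1) := by
      have := (Real.continuous_exp.tendsto 0).comp h0
      simpa [Function.comp_def] using this
    have h2 : Tendsto (fun g : ℝ => 1 - Real.exp (-((θ₁s/βSR)/g)) * M) atTop (𝓝 (1 - 1 * M)) :=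
      tendsto_const_nhds.sub (h1.mul tendsto_const_nhds)
    rw [one_mul] at h2
    refine h2.congr ?_
    intro g
    simp only [hqqdef, hdivdiv]
  have hp3lim : Tendsto p3 atTop (𝓝 0) := by
    have h0 : Tendsto (fun g : ℝ => -((θ₁s/βRDf)/g)) atTop (𝓝 0) := by
      simpa using (aux_tendsto_const_div_atTop (θ₁s/βRDf)).neg
    have h1 : Tendsto (fun g : ℝ => Real.exp (-((θ₁s/βRDf)/g))) atTop (𝓝 1) := by
      have := (Real.continuous_exp.tendsto 0).comp h0
      simpa [Function.comp_def] using this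
    have h2 : Tendsto (fun g : ℝ => 1 - Real.exp (-((θ₁s/βRDf)/g))) atTop (𝓝 (1 - 1)) :=
      tendsto_const_nhds.sub h1
    rw [sub_self] at h2
    refine h2.congr ?_
    intro g
    simp only [hp3def, hdivdiv]
  have hmain : Tendsto (fun g : ℝ => (g * p2 g) * (qq g + (1 - qq g) * p3 g)) atTop
      (𝓝 ((θ₁s/βSDf) * ((1 - M) + (1 - (1 - M)) * 0))) :=
    hL2.mul (hq.add ((tendsto_const_nhds.sub hq).mul hp3lim))
  have hconst : (θ₁s/βSDf) * ((1 - M) + (1 - (1 - M)) * 0) = θ₁s/βSDf * (1 - M) := by ring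
  rw [hconst] at hmain
  have final : Tendsto (fun g : ℝ => g * Pout g) atTop (𝓝 (θ₁s/βSDf * (1 - M))) := by
    refine hmain.congr' ?_
    filter_upwards [eventually_gt_atTop (0:ℝ)] with g hg
    rw [hPoutEq g hg]
    ring
  -- constant identification
  have hθδ : 0 < δ * θ₁s := by positivity
  have ea : π / a = π * βSR / (δ * θ₁s) := by
    rw [hadef, div_div_eq_mul_div, mul_comm θ₁s δ]
  have eb : 1/(4*a*βRR^2) = βSR / (4 * βRR ^ 2 * δ * θ₁s) := by
    rw [hadef, div_eq_div_iff (by positivity) (by positivity)]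
    field_simp
  have ec : 1/(2*βRR*Real.sqrt a) = 1 / (2 * βRR) * Real.sqrt (βSR / (δ * θ₁s)) := by
    have h1 : βSR / (δ * θ₁s) = a⁻¹ := by
      rw [hadef, inv_div, mul_comm θ₁s δ]
    rw [h1, Real.sqrt_inv, one_div, one_div, ← mul_inv]
  have ed : 1/(1 + b*βLI) = βSR / (βSR + βLI * w * θ₁s) := by
    have hpos : 0 < βSR + βLI * w * θ₁s := by positivity
    rw [hbdef, div_eq_div_iff (by positivity) hpos.ne']
    field_simp
  have hMfinal : M = βSR / (2 * βRR * (βSR + βLI * w * θ₁s))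
      * Real.sqrt (π * βSR / (δ * θ₁s))
      * Real.exp (βSR / (4 * βRR ^ 2 * δ * θ₁s))
      * erfc (1 / (2 * βRR) * Real.sqrt (βSR / (δ * θ₁s))) := by
    rw [hMeq, ea, eb, ec, ed]
    rw [show βSR / (2 * βRR * (βSR + βLI * w * θ₁s))
        = 1/(2*βRR) * (βSR/(βSR + βLI * w * θ₁s)) by rw [div_mul_div_comm, one_mul]]
    ring
  rw [hMfinal] at final
  exact final
end

section
/- In the setting of Theorem 1 with a common transmit SNR γ_c = γ_r = γ and δ > 0, writing P_out(γ) for the outage probability P(max(γ₁,γ₂) < γ_th) + P(γ₁ ≥ γ_th and max(γ₃,γ₂) < γ_th), the diversity order equals one: lim_{γ→∞} ( − log(P_out(γ)) / log(γ) ) = 1. -/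
open MeasureTheory ProbabilityTheory Real Filter

lemma expM_Iic {r : ℝ} (hr : 0 < r) (x : ℝ) :
    expMeasure r (Set.Iic x) = ENNReal.ofReal (if 0 ≤ x then 1 - Real.exp (-(r * x)) else 0) := by
  have hP := isProbabilityMeasure_expMeasure hr
  have h := cdf_expMeasure_eq hr x
  rw [cdf_eq_real] at h
  rw [← h, measureReal_def, ENNReal.ofReal_toReal (measure_ne_top _ _)]

lemma expM_Iio {r : ℝ} (hr : 0 < r) (x : ℝ) :
    expMeasure r (Set.Iio x) = ENNReal.ofReal (if 0 ≤ x then 1 - Real.exp (-(r * x)) else 0) := by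
  have hs : expMeasure r {x} = 0 := by
    have habs : expMeasure r ≪ volume := by
      rw [expMeasure, gammaMeasure]
      exact withDensity_absolutelyContinuous _ _
    exact habs (Real.volume_singleton)
  have h2 : expMeasure r (Set.Iio x) = expMeasure r (Set.Iic x) := by
    rw [← Set.Iio_union_right]
    exact le_antisymm (measure_mono Set.subset_union_left)
      ((measure_union_le _ _).trans_eq (by rw [hs, add_zero]))
  rw [h2, expM_Iic hr x]

lemma aux_tendsto (f : ℝ → ℝ) (A B : ℝ) (hB : 0 < B) (hA : 0 < A)
    (h : ∀ᶠ g in atTop, B / g ≤ f g ∧ f g ≤ A / g) :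
    Tendsto (fun g : ℝ => -Real.log (f g) / Real.log g) atTop (nhds 1) := by
  have hlog : ∀ C : ℝ, Tendsto (fun g : ℝ => (Real.log g - Real.log C) / Real.log g)
      atTop (nhds 1) := by
    intro C
    have h1 : Tendsto (fun g : ℝ => 1 - Real.log C * (Real.log g)⁻¹) atTop
        (nhds (1 - Real.log C * 0)) :=
      tendsto_const_nhds.sub (tendsto_const_nhds.mul Real.tendsto_log_atTop.inv_tendsto_atTop)
    rw [mul_zero, sub_zero] at h1
    apply h1.congr'
    filter_upwards [eventually_gt_atTop (1 : ℝ)] with g hg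
    have : Real.log g ≠ 0 := ne_of_gt (Real.log_pos hg)
    field_simp
  refine tendsto_of_tendsto_of_tendsto_of_le_of_le' (hlog A) (hlog B) ?_ ?_
  · filter_upwards [h, eventually_gt_atTop (1 : ℝ)] with g ⟨h1, h2⟩ hg
    have hg0 : (0:ℝ) < g := by linarith
    have hf0 : 0 < f g := lt_of_lt_of_le (by positivity) h1
    have hlg : 0 < Real.log g := Real.log_pos hg
    have hkey : Real.log (f g) ≤ Real.log A - Real.log g := by
      have := Real.log_le_log hf0 h2
      rwa [Real.log_div (ne_of_gt hA) (ne_of_gt hg0)] at this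
    apply div_le_div_of_nonneg_right ?_ hlg.le
    linarith
  · filter_upwards [h, eventually_gt_atTop (1 : ℝ)] with g ⟨h1, h2⟩ hg
    have hg0 : (0:ℝ) < g := by linarith
    have hf0 : 0 < f g := lt_of_lt_of_le (by positivity) h1
    have hlg : 0 < Real.log g := Real.log_pos hg
    have hkey : Real.log B - Real.log g ≤ Real.log (f g) := by
      have := Real.log_le_log (by positivity) h1
      rwa [Real.log_div (ne_of_gt hB) (ne_of_gt hg0)] at this
    apply div_le_div_of_nonneg_right ?_ hlg.le
    linarith

set_option maxHeartbeats 1000000 in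
/-- **Diversity order of the far IoT device equals one** (Corollary 1 / equation (20)),
with common transmit SNR `γ_c = γ_r = g → ∞`:
`lim_{g→∞} (− log P_out(g) / log g) = 1`. -/
theorem diversity_order_far_device
    {Ω : Type*} [MeasurableSpace Ω] (P : Measure Ω) [IsProbabilityMeasure P]
    (βSR βRR βLI βSDf βRDf : ℝ)
    (hβSR : 0 < βSR) (hβRR : 0 < βRR) (hβLI : 0 < βLI) (hβSDf : 0 < βSDf) (hβRDf : 0 < βRDf)
    (rSR rSDf rRDf rLI V : Ω → ℝ)
    (hrSR : Measurable rSR) (hrSDf : Measurable rSDf) (hrRDf : Measurable rRDf)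
    (hrLI : Measurable rLI) (hV : Measurable V)
    (hlawSR : Measure.map rSR P = expMeasure (1 / βSR))
    (hlawSDf : Measure.map rSDf P = expMeasure (1 / βSDf))
    (hlawRDf : Measure.map rRDf P = expMeasure (1 / βRDf))
    (hlawLI : Measure.map rLI P = expMeasure (1 / βLI))
    (hlawV : Measure.map V P = expMeasure (1 / βRR))
    (hindep : iIndepFun ![rSR, rSDf, rRDf, rLI, V] P)
    (δ w an af γth : ℝ)
    (hδ : δ ∈ Set.Ioc (0 : ℝ) 1) (hw : w = 0 ∨ w = 1)
    (han : 0 < an) (hanf : an < af) (hsum : an + af = 1)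
    (hγth : 0 < γth) (hdec : an * γth < af)
    (Pout : ℝ → ℝ)
    (hPout : ∀ g : ℝ,
      Pout g =
        (P {ω | max (af * rSR ω * g /
                    (an * rSR ω * g + (V ω) ^ 2 * δ * g + rLI ω * w * g + 1))
                 (af * rSDf ω * g / (an * rSDf ω * g + 1)) < γth}).toReal
        + (P {ω | γth ≤ af * rSR ω * g /
                    (an * rSR ω * g + (V ω) ^ 2 * δ * g + rLI ω * w * g + 1)
               ∧ max (af * rRDf ω * g / (an * rRDf ω * g + 1))
                     (af * rSDf ω * g / (an * rSDf ω * g + 1)) < γth}).toReal) :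
    Tendsto (fun g : ℝ => -Real.log (Pout g) / Real.log g) atTop (nhds 1) := by
  obtain ⟨hδ0, hδ1⟩ := hδ
  have haf : 0 < af := lt_trans han hanf
  have hden : 0 < af - an * γth := by linarith
  set c : ℝ := γth / (af - an * γth) with hc
  have hc0 : 0 < c := div_pos hγth hden
  have hr20 : 0 < 1 / βSDf := by positivity
  set r2 : ℝ := 1 / βSDf with hr2
  set M : ℝ := Real.sqrt (2 * af / (δ * γth)) with hM
  have hM2 : M ^ 2 = 2 * af / (δ * γth) := Real.sq_sqrt (by positivity)
  have hM0 : 0 < M := Real.sqrt_pos.mpr (by positivity)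
  set p2 : ℝ := 1 - Real.exp (-(1 / βSR * 1)) with hp2
  have hp20 : 0 < p2 := by
    have h1 : Real.exp (-(1 / βSR * 1)) < 1 := by
      rw [Real.exp_lt_one_iff]
      have : 0 < 1 / βSR := by positivity
      linarith
    simp only [hp2]; linarith
  set p3 : ℝ := Real.exp (-(1 / βRR * M)) with hp3
  have hp30 : 0 < p3 := Real.exp_pos _
  have hp31 : p3 ≤ 1 := by
    rw [hp3, Real.exp_le_one_iff]
    have : 0 < 1 / βRR * M := by positivity
    linarith
  set K : ℝ := p2 * p3 with hK
  have hK0 : 0 < K := mul_pos hp20 hp30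
  apply aux_tendsto Pout (2 * (r2 * c)) (K * (r2 * c) / 2) (by positivity) (by positivity)
  filter_upwards [eventually_ge_atTop (max 1 (r2 * c))] with g hg
  have hg1 : (1:ℝ) ≤ g := le_trans (le_max_left _ _) hg
  have hg0 : (0:ℝ) < g := lt_of_lt_of_le one_pos hg1
  have hgrc : r2 * c ≤ g := le_trans (le_max_right _ _) hg
  set t : ℝ := c / g with ht
  have ht0 : 0 < t := div_pos hc0 hg0
  set x : ℝ := r2 * t with hx
  have hx0 : 0 < x := mul_pos hr20 ht0
  have hx1 : x ≤ 1 := by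
    rw [hx, ht, mul_div_assoc']
    exact div_le_one_of_le₀ hgrc hg0.le
  have hexp_ub : 1 - Real.exp (-x) ≤ x := by
    have := Real.add_one_le_exp (-x)
    linarith
  have hexp_lb : x / 2 ≤ 1 - Real.exp (-x) := by
    have h1 := Real.add_one_le_exp x
    have h2 : Real.exp (-x) * Real.exp x = 1 := by
      rw [← Real.exp_add]; simp
    nlinarith [Real.exp_pos x, Real.exp_pos (-x)]
  have h1e : (0:ℝ) ≤ 1 - Real.exp (-x) := by linarith
  -- measure computations
  have hmapSDf : ∀ s : Set ℝ, MeasurableSet s → P (rSDf ⁻¹' s) = expMeasure r2 s := fun s hs => by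
    rw [← hlawSDf, Measure.map_apply hrSDf hs]
  have hmapSR : ∀ s : Set ℝ, MeasurableSet s → P (rSR ⁻¹' s) = expMeasure (1 / βSR) s :=
    fun s hs => by rw [← hlawSR, Measure.map_apply hrSR hs]
  have hmapLI : ∀ s : Set ℝ, MeasurableSet s → P (rLI ⁻¹' s) = expMeasure (1 / βLI) s :=
    fun s hs => by rw [← hlawLI, Measure.map_apply hrLI hs]
  have hmapV : ∀ s : Set ℝ, MeasurableSet s → P (V ⁻¹' s) = expMeasure (1 / βRR) s :=
    fun s hs => by rw [← hlawV, Measure.map_apply hV hs]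
  have hSDf0 : P (rSDf ⁻¹' Set.Iio 0) = 0 := by
    rw [hmapSDf _ measurableSet_Iio, expM_Iio hr20]; norm_num
  have hSDft : P (rSDf ⁻¹' Set.Iio t) = ENNReal.ofReal (1 - Real.exp (-x)) := by
    rw [hmapSDf _ measurableSet_Iio, expM_Iio hr20, if_pos ht0.le, hx]
  have hSDfIco : P (rSDf ⁻¹' Set.Ico 0 t) = ENNReal.ofReal (1 - Real.exp (-x)) := by
    rw [show Set.Ico (0:ℝ) t = Set.Iio t \ Set.Iio 0 by ext; simp [and_comm], Set.preimage_diff,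
      measure_diff (Set.preimage_mono (Set.Iio_subset_Iio ht0.le))
        (hrSDf measurableSet_Iio).nullMeasurableSet (by rw [hSDf0]; exact ENNReal.zero_ne_top),
      hSDf0, hSDft, tsub_zero]
  have hSR0 : P (rSR ⁻¹' Set.Iio 0) = 0 := by
    have h0 : (0:ℝ) < 1 / βSR := by positivity
    rw [hmapSR _ measurableSet_Iio, expM_Iio h0]; norm_num
  have hSRIcc : P (rSR ⁻¹' Set.Icc 0 1) = ENNReal.ofReal p2 := by
    have h0 : (0:ℝ) < 1 / βSR := by positivity
    rw [show Set.Icc (0:ℝ) 1 = Set.Iic 1 \ Set.Iio 0 by ext; simp [and_comm], Set.preimage_diff,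
      measure_diff (Set.preimage_mono (Set.Iio_subset_Iic_self.trans (Set.Iic_subset_Iic.mpr zero_le_one)))
        (hrSR measurableSet_Iio).nullMeasurableSet (by rw [hSR0]; exact ENNReal.zero_ne_top),
      hSR0, hmapSR _ measurableSet_Iic, expM_Iic h0, if_pos zero_le_one, tsub_zero, hp2]
  have hLI1 : P (rLI ⁻¹' Set.Ici 0) = 1 := by
    have h0 : (0:ℝ) < 1 / βLI := by positivity
    have hLI0 : P (rLI ⁻¹' Set.Iio 0) = 0 := by
      rw [hmapLI _ measurableSet_Iio, expM_Iio h0]; norm_num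
    have : P (rLI ⁻¹' (Set.Iio 0)ᶜ) = 1 - P (rLI ⁻¹' Set.Iio 0) := by
      rw [Set.preimage_compl]
      exact prob_compl_eq_one_sub (hrLI measurableSet_Iio)
    rwa [Set.compl_Iio, hLI0, tsub_zero] at this
  have hVIci : P (V ⁻¹' Set.Ici M) = ENNReal.ofReal p3 := by
    have h0 : (0:ℝ) < 1 / βRR := by positivity
    have hVM : P (V ⁻¹' Set.Iio M) = ENNReal.ofReal (1 - p3) := by
      rw [hmapV _ measurableSet_Iio, expM_Iio h0, if_pos hM0.le, hp3]
    have hcompl : P (V ⁻¹' (Set.Iio M)ᶜ) = 1 - P (V ⁻¹' Set.Iio M) := by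
      rw [Set.preimage_compl]
      exact prob_compl_eq_one_sub (hV measurableSet_Iio)
    rw [Set.compl_Iio, hVM] at hcompl
    rw [hcompl]
    have hsplit : (1 : ENNReal) = ENNReal.ofReal p3 + ENNReal.ofReal (1 - p3) := by
      rw [← ENNReal.ofReal_add hp30.le (by linarith), ← ENNReal.ofReal_one]
      norm_num
    rw [hsplit, ENNReal.add_sub_cancel_right ENNReal.ofReal_ne_top]
  -- the independence product
  set F : Fin 5 → Ω → ℝ := ![rSR, rSDf, rRDf, rLI, V] with hF
  set S : Fin 5 → Set ℝ := ![Set.Icc 0 1, Set.Ico 0 t, Set.univ, Set.Ici 0, Set.Ici M] with hS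
  have hmeas : ∀ i, i ∈ Finset.univ → MeasurableSet (S i) := by
    intro i _
    fin_cases i
    · exact measurableSet_Icc
    · exact measurableSet_Ico
    · exact MeasurableSet.univ
    · exact measurableSet_Ici
    · exact measurableSet_Ici
  have hprod := hindep.measure_inter_preimage_eq_mul Finset.univ hmeas
  rw [Fin.prod_univ_five] at hprod
  have hF0 : F 0 = rSR := rfl
  have hF1 : F 1 = rSDf := rfl
  have hF2 : F 2 = rRDf := rfl
  have hF3 : F 3 = rLI := rfl
  have hF4 : F 4 = V := rfl
  have hS0 : S 0 = Set.Icc 0 1 := rfl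
  have hS1 : S 1 = Set.Ico 0 t := rfl
  have hS2 : S 2 = Set.univ := rfl
  have hS3 : S 3 = Set.Ici 0 := rfl
  have hS4 : S 4 = Set.Ici M := rfl
  rw [hF0, hF1, hF2, hF3, hF4, hS0, hS1, hS2, hS3, hS4] at hprod
  simp only [Set.preimage_univ, measure_univ, hSRIcc, hSDfIco, hLI1, hVIci, mul_one,
    one_mul] at hprod
  -- inclusion of the intersection in the first outage event
  have hsubset : (⋂ i ∈ Finset.univ, F i ⁻¹' S i) ⊆
      {ω | max (af * rSR ω * g /
            (an * rSR ω * g + (V ω) ^ 2 * δ * g + rLI ω * w * g + 1))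
          (af * rSDf ω * g / (an * rSDf ω * g + 1)) < γth} := by
    intro ω hω
    simp only [Set.mem_iInter] at hω
    have h0 : rSR ω ∈ Set.Icc (0:ℝ) 1 := hω 0 (Finset.mem_univ 0)
    have h1 : rSDf ω ∈ Set.Ico (0:ℝ) t := hω 1 (Finset.mem_univ 1)
    have h3 : rLI ω ∈ Set.Ici (0:ℝ) := hω 3 (Finset.mem_univ 3)
    have h4 : V ω ∈ Set.Ici M := hω 4 (Finset.mem_univ 4)
    obtain ⟨ha0, ha1⟩ := h0
    obtain ⟨hb0, hb1⟩ := h1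
    have h3' : (0:ℝ) ≤ rLI ω := h3
    have h4' : M ≤ V ω := h4
    simp only [Set.mem_setOf_eq]
    apply max_lt
    · have hVM : M ^ 2 ≤ (V ω) ^ 2 := by
        have := pow_le_pow_left₀ hM0.le h4' 2
        simpa using this
      have hw0 : 0 ≤ rLI ω * w * g := by
        rcases hw with h | h <;> rw [h]
        · simp
        · positivity
      have hDle : M ^ 2 * δ * g ≤
          an * rSR ω * g + (V ω) ^ 2 * δ * g + rLI ω * w * g + 1 := by
        have e1 : M ^ 2 * δ * g ≤ (V ω) ^ 2 * δ * g :=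
          mul_le_mul_of_nonneg_right (mul_le_mul_of_nonneg_right hVM hδ0.le) hg0.le
        have e2 : 0 ≤ an * rSR ω * g := by positivity
        linarith
      have hDpos : 0 < M ^ 2 * δ * g := by positivity
      calc af * rSR ω * g / (an * rSR ω * g + (V ω) ^ 2 * δ * g + rLI ω * w * g + 1)
          ≤ af * g / (M ^ 2 * δ * g) := by
            have enum : af * rSR ω * g ≤ af * g := by
              have := mul_le_mul_of_nonneg_right
                (mul_le_mul_of_nonneg_left ha1 haf.le) hg0.le
              rw [mul_one] at this
              exact this
            exact div_le_div₀ (by positivity) enum hDpos hDle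
        _ = γth / 2 := by
            rw [hM2]; field_simp
        _ < γth := by linarith
    · have hdpos : (0:ℝ) < an * rSDf ω * g + 1 := by positivity
      rw [div_lt_iff₀ hdpos]
      have hbt : rSDf ω * g * (af - an * γth) < γth := by
        have h5 : rSDf ω * g < c := by
          rw [ht] at hb1
          calc rSDf ω * g < (c / g) * g := by
                exact mul_lt_mul_of_pos_right hb1 hg0
            _ = c := by field_simp
        calc rSDf ω * g * (af - an * γth) < c * (af - an * γth) :=
              mul_lt_mul_of_pos_right h5 hden
          _ = γth := by rw [hc]; exact div_mul_cancel₀ _ hden.ne'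
      linarith [hbt]
  -- lower bound
  have hT2nonneg : (0:ℝ) ≤ (P {ω | γth ≤ af * rSR ω * g /
        (an * rSR ω * g + (V ω) ^ 2 * δ * g + rLI ω * w * g + 1)
      ∧ max (af * rRDf ω * g / (an * rRDf ω * g + 1))
            (af * rSDf ω * g / (an * rSDf ω * g + 1)) < γth}).toReal :=
    ENNReal.toReal_nonneg
  have hlow : K * (r2 * c) / 2 / g ≤ Pout g := by
    rw [hPout g]
    have h1 : K * (1 - Real.exp (-x)) ≤ (P {ω | max (af * rSR ω * g /
          (an * rSR ω * g + (V ω) ^ 2 * δ * g + rLI ω * w * g + 1))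
        (af * rSDf ω * g / (an * rSDf ω * g + 1)) < γth}).toReal := by
      have e1 : ENNReal.ofReal p2 * ENNReal.ofReal (1 - Real.exp (-x)) * ENNReal.ofReal p3
          = ENNReal.ofReal (p2 * (1 - Real.exp (-x)) * p3) := by
        rw [← ENNReal.ofReal_mul hp20.le, ← ENNReal.ofReal_mul (mul_nonneg hp20.le h1e)]
      have e2 : (P (⋂ i ∈ Finset.univ, F i ⁻¹' S i)).toReal
          = p2 * (1 - Real.exp (-x)) * p3 := by
        rw [hprod, e1, ENNReal.toReal_ofReal (mul_nonneg (mul_nonneg hp20.le h1e) hp30.le)]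
      calc K * (1 - Real.exp (-x)) = p2 * (1 - Real.exp (-x)) * p3 := by rw [hK]; ring
        _ = (P (⋂ i ∈ Finset.univ, F i ⁻¹' S i)).toReal := e2.symm
        _ ≤ _ := ENNReal.toReal_mono (measure_ne_top _ _) (measure_mono hsubset)
    have hxg : K * (r2 * c) / 2 / g = K * (x / 2) := by
      rw [hx, ht]; field_simp
    rw [hxg]
    have : K * (x / 2) ≤ K * (1 - Real.exp (-x)) := by
      apply mul_le_mul_of_nonneg_left hexp_lb hK0.le
    linarith
  -- upper bound
  have hupper : Pout g ≤ 2 * (r2 * c) / g := by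
    have hUsub : ∀ ω : Ω, af * rSDf ω * g / (an * rSDf ω * g + 1) < γth →
        ω ∈ rSDf ⁻¹' Set.Iio t ∪ rSDf ⁻¹' Set.Iio 0 := by
      intro ω hlt
      rcases lt_or_ge (rSDf ω) 0 with h | h
      · exact Or.inr h
      · left
        have hdpos : (0:ℝ) < an * rSDf ω * g + 1 := by positivity
        rw [div_lt_iff₀ hdpos] at hlt
        show rSDf ω < t
        rw [ht, hc, lt_div_iff₀ hg0, lt_div_iff₀ hden]
        linarith [hlt]
    have hU : (P (rSDf ⁻¹' Set.Iio t ∪ rSDf ⁻¹' Set.Iio 0)).toReal ≤ 1 - Real.exp (-x) := by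
      have : P (rSDf ⁻¹' Set.Iio t ∪ rSDf ⁻¹' Set.Iio 0)
          ≤ ENNReal.ofReal (1 - Real.exp (-x)) := by
        calc P (rSDf ⁻¹' Set.Iio t ∪ rSDf ⁻¹' Set.Iio 0)
            ≤ P (rSDf ⁻¹' Set.Iio t) + P (rSDf ⁻¹' Set.Iio 0) := measure_union_le _ _
          _ = ENNReal.ofReal (1 - Real.exp (-x)) := by rw [hSDft, hSDf0, add_zero]
      calc (P (rSDf ⁻¹' Set.Iio t ∪ rSDf ⁻¹' Set.Iio 0)).toReal
          ≤ (ENNReal.ofReal (1 - Real.exp (-x))).toReal :=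
            ENNReal.toReal_mono ENNReal.ofReal_ne_top this
        _ = 1 - Real.exp (-x) := ENNReal.toReal_ofReal h1e
    have hT1 : (P {ω | max (af * rSR ω * g /
          (an * rSR ω * g + (V ω) ^ 2 * δ * g + rLI ω * w * g + 1))
        (af * rSDf ω * g / (an * rSDf ω * g + 1)) < γth}).toReal ≤ 1 - Real.exp (-x) := by
      refine le_trans (ENNReal.toReal_mono (measure_ne_top _ _) (measure_mono ?_)) hU
      intro ω hω
      exact hUsub ω ((max_lt_iff.mp hω).2)
    have hT2 : (P {ω | γth ≤ af * rSR ω * g /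
          (an * rSR ω * g + (V ω) ^ 2 * δ * g + rLI ω * w * g + 1)
        ∧ max (af * rRDf ω * g / (an * rRDf ω * g + 1))
              (af * rSDf ω * g / (an * rSDf ω * g + 1)) < γth}).toReal
        ≤ 1 - Real.exp (-x) := by
      refine le_trans (ENNReal.toReal_mono (measure_ne_top _ _) (measure_mono ?_)) hU
      intro ω hω
      exact hUsub ω ((max_lt_iff.mp hω.2).2)
    have hxg2 : 2 * (r2 * c) / g = 2 * x := by
      rw [hx, ht]; field_simp
    rw [hPout g, hxg2]
    linarith
  exact ⟨hlow, hupper⟩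
end

section
/- Let γ_f > 0 and γ_n > 0. On the set D = { a ∈ ℝ : 0 < a and a·(1 + γ_f) < 1 } define θ₁*(a) = γ_f/(1 − a·(1 + γ_f)) and θ₂*(a) = γ_n/a, and let a† = γ_n/(γ_f + γ_n + γ_f·γ_n). Then: (i) a† ∈ D; (ii) θ₁*(a†) = θ₂*(a†); (iii) max(θ₁*(a), θ₂*(a)) = θ₂*(a) for all a ∈ D with a ≤ a†, and max(θ₁*(a), θ₂*(a)) = θ₁*(a) for all a ∈ D with a ≥ a†; and (iv) for every a ∈ D, max(θ₁*(a), θ₂*(a)) ≥ max(θ₁*(a†), θ₂*(a†)), i.e., a† is a global minimizer of a ↦ max(θ₁*(a), θ₂*(a)) on D. -/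
/-- **Optimal power allocation in the sensing-centric design (equations (47)–(48)).**
On `D = {a : 0 < a ∧ a(1+γ_f) < 1}`, with `θ₁*(a) = γ_f/(1 − a(1+γ_f))`,
`θ₂*(a) = γ_n/a` and `a† = γ_n/(γ_f + γ_n + γ_f γ_n)`: (i) `a† ∈ D`;
(ii) `θ₁*(a†) = θ₂*(a†)`; (iii) `max(θ₁*,θ₂*) = θ₂*` left of `a†` and `= θ₁*` right
of `a†`; (iv) `a†` globally minimizes `max(θ₁*,θ₂*)` on `D`. -/
theorem optimal_power_allocation_scd (γf γn : ℝ) (hγf : 0 < γf) (hγn : 0 < γn) :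
    let D : Set ℝ := {a : ℝ | 0 < a ∧ a * (1 + γf) < 1}
    let θ₁ : ℝ → ℝ := fun a => γf / (1 - a * (1 + γf))
    let θ₂ : ℝ → ℝ := fun a => γn / a
    let adag : ℝ := γn / (γf + γn + γf * γn)
    adag ∈ D
    ∧ θ₁ adag = θ₂ adag
    ∧ (∀ a ∈ D, a ≤ adag → max (θ₁ a) (θ₂ a) = θ₂ a)
    ∧ (∀ a ∈ D, adag ≤ a → max (θ₁ a) (θ₂ a) = θ₁ a)
    ∧ (∀ a ∈ D, max (θ₁ adag) (θ₂ adag) ≤ max (θ₁ a) (θ₂ a)) := by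
  intro D θ₁ θ₂ adag
  have hS : 0 < γf + γn + γf * γn := by positivity
  have hm : adag * (γf + γn + γf * γn) = γn := div_mul_cancel₀ _ hS.ne'
  have hadag_pos : 0 < adag := div_pos hγn hS
  have hadag_lt : adag * (1 + γf) < 1 := by
    rw [div_mul_eq_mul_div, div_lt_one hS]; nlinarith
  have hadagD : adag ∈ D := ⟨hadag_pos, hadag_lt⟩
  have hden_adag : 1 - adag * (1 + γf) = γf / (γf + γn + γf * γn) := by
    rw [eq_div_iff hS.ne']; nlinarith [hm]
  have hθ₁adag : θ₁ adag = γf + γn + γf * γn := by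
    show γf / (1 - adag * (1 + γf)) = _
    rw [hden_adag, div_div_eq_mul_div, mul_comm, mul_div_assoc, div_self hγf.ne', mul_one]
  have hθ₂adag : θ₂ adag = γf + γn + γf * γn := by
    show γn / adag = _
    rw [div_div_eq_mul_div, mul_comm, mul_div_assoc, div_self hγn.ne', mul_one]
  have hden : ∀ a ∈ D, 0 < 1 - a * (1 + γf) := fun a ha => by linarith [ha.2]
  have hcmp_le : ∀ a ∈ D, a ≤ adag → θ₁ a ≤ θ₂ a := by
    intro a ha hle
    have h1 := hden a ha
    have h2 := ha.1
    show γf / (1 - a * (1 + γf)) ≤ γn / a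
    rw [div_le_div_iff₀ h1 h2]
    have : a * (γf + γn + γf * γn) ≤ γn := by
      calc a * (γf + γn + γf * γn) ≤ adag * (γf + γn + γf * γn) :=
            mul_le_mul_of_nonneg_right hle hS.le
        _ = γn := hm
    nlinarith
  have hcmp_ge : ∀ a ∈ D, adag ≤ a → θ₂ a ≤ θ₁ a := by
    intro a ha hle
    have h1 := hden a ha
    have h2 := ha.1
    show γn / a ≤ γf / (1 - a * (1 + γf))
    rw [div_le_div_iff₀ h2 h1]
    have : γn ≤ a * (γf + γn + γf * γn) := by
      calc γn = adag * (γf + γn + γf * γn) := hm.symm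
        _ ≤ a * (γf + γn + γf * γn) := mul_le_mul_of_nonneg_right hle hS.le
    nlinarith
  refine ⟨hadagD, by rw [hθ₁adag, hθ₂adag], fun a ha h => max_eq_right (hcmp_le a ha h),
    fun a ha h => max_eq_left (hcmp_ge a ha h), ?_⟩
  intro a ha
  have hmaxadag : max (θ₁ adag) (θ₂ adag) = γf + γn + γf * γn := by
    rw [hθ₁adag, hθ₂adag, max_self]
  rw [hmaxadag]
  rcases le_total a adag with h | h
  · refine le_trans ?_ (le_max_right _ _)
    have h2 : θ₂ adag ≤ θ₂ a := div_le_div_of_nonneg_left hγn.le ha.1 h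
    rw [hθ₂adag] at h2; exact h2
  · refine le_trans ?_ (le_max_left _ _)
    have hda := hden a ha
    have h2 : θ₁ adag ≤ θ₁ a := by
      apply div_le_div_of_nonneg_left hγf.le hda
      nlinarith
    rw [hθ₁adag] at h2; exact h2
end

section
/- Let ρ, l₂, c₂, c₃, N be positive real constants. Then the function f : (0, ∞) → ℝ defined by f(a) = −ln(a·ρ + l₂) − ln(a) + ln(a·c₃ + N) + min( ln(a·ρ + l₂) − ln(l₂), ln(a·c₂ + N) − ln(N) ) is antitone (nonincreasing) on (0, ∞). -/
private lemma log_sub_le_log_sub {u v w z : ℝ} (hu : 0 < u) (hv : 0 < v)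
    (hw : 0 < w) (hz : 0 < z) (h : u * z ≤ v * w) :
    Real.log u - Real.log w ≤ Real.log v - Real.log z := by
  rw [sub_le_sub_iff, ← Real.log_mul hu.ne' hz.ne', ← Real.log_mul hv.ne' hw.ne']
  exact Real.log_le_log (by positivity) h

/-- **Monotonicity of the high-SNR sum rate in the near-device power coefficient**
(equations (62)–(67) of the communication-centric design): for positive constants
`ρ, l₂, c₂, c₃, N`, the function
`f(a) = −ln(aρ+l₂) − ln a + ln(ac₃+N) + min(ln(aρ+l₂) − ln l₂, ln(ac₂+N) − ln N)`
is antitone (nonincreasing) on `(0,∞)`. -/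
theorem sum_rate_antitone (ρ l₂ c₂ c₃ N : ℝ)
    (hρ : 0 < ρ) (hl₂ : 0 < l₂) (hc₂ : 0 < c₂) (hc₃ : 0 < c₃) (hN : 0 < N) :
    AntitoneOn (fun a : ℝ =>
        -Real.log (a * ρ + l₂) - Real.log a + Real.log (a * c₃ + N)
          + min (Real.log (a * ρ + l₂) - Real.log l₂)
                (Real.log (a * c₂ + N) - Real.log N))
      (Set.Ioi (0 : ℝ)) := by
  intro x hx y hy hxy
  simp only [Set.mem_Ioi] at hx hy
  have hxρ : 0 < x * ρ + l₂ := by positivity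
  have hyρ : 0 < y * ρ + l₂ := by positivity
  have hxc₂ : 0 < x * c₂ + N := by positivity
  have hyc₂ : 0 < y * c₂ + N := by positivity
  have hxc₃ : 0 < x * c₃ + N := by positivity
  have hyc₃ : 0 < y * c₃ + N := by positivity
  have h1 : Real.log (y * c₃ + N) - Real.log y ≤ Real.log (x * c₃ + N) - Real.log x :=
    log_sub_le_log_sub hyc₃ hxc₃ hy hx (by nlinarith)
  have h2 : min (Real.log (y * ρ + l₂) - Real.log l₂) (Real.log (y * c₂ + N) - Real.log N)
        - Real.log (y * ρ + l₂)
      ≤ min (Real.log (x * ρ + l₂) - Real.log l₂) (Real.log (x * c₂ + N) - Real.log N)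
        - Real.log (x * ρ + l₂) := by
    rw [← min_sub_sub_right, ← min_sub_sub_right, sub_sub_cancel_left, sub_sub_cancel_left]
    rcases le_or_gt (c₂ * l₂) (ρ * N) with hcase | hcase
    · refine min_le_min le_rfl ?_
      have : Real.log (y * c₂ + N) - Real.log (y * ρ + l₂)
          ≤ Real.log (x * c₂ + N) - Real.log (x * ρ + l₂) :=
        log_sub_le_log_sub hyc₂ hxc₂ hyρ hxρ (by nlinarith)
      linarith
    · have hxmin : -Real.log l₂ ≤ Real.log (x * c₂ + N) - Real.log N - Real.log (x * ρ + l₂) := by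
        have : Real.log (N * (x * ρ + l₂)) ≤ Real.log ((x * c₂ + N) * l₂) :=
          Real.log_le_log (by positivity) (by nlinarith)
        rw [Real.log_mul hN.ne' hxρ.ne', Real.log_mul hxc₂.ne' hl₂.ne'] at this
        linarith
      calc min (-Real.log l₂) (Real.log (y * c₂ + N) - Real.log N - Real.log (y * ρ + l₂))
          ≤ -Real.log l₂ := min_le_left _ _
        _ = min (-Real.log l₂) (Real.log (x * c₂ + N) - Real.log N - Real.log (x * ρ + l₂)) :=
            (min_eq_left hxmin).symm
  simp only
  linarith
end
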